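/- For p ∈ (0,1) and φ(j) = (1-(1-p)^j)/p, the function x ↦ E[φ(Poi(x))]/φ(x) = (1 - e^{-px})/(1 - (1-p)^x) is strictly increasing on [1,∞), and hence α_φ = min_{x ∈ ℕ, x≥1} E[φ(Poi(x))]/φ(x) = (1 - e^{-p})/p. -/

import Mathlib

open Real

lemma tsum_exp' (x : ℝ) : ∑' n : ℕ, x ^ n / (Nat.factorial n) = Real.exp x := by
  rw [Real.exp_eq_exp_ℝ, NormedSpace.exp_eq_tsum_div]

lemma part1 (p : ℝ) (hp : p ∈ Set.Ioo (0 : ℝ) 1) (x : ℝ) (_ : 0 ≤ x) :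
    (∑' k : ℕ, Real.exp (-x) * x ^ k / (Nat.factorial k) * ((1 - (1 - p) ^ k) / p)) =
      (1 - Real.exp (-(p * x))) / p := by
  have hp0 := hp.1
  have h1 : Summable (fun k : ℕ => x ^ k / (Nat.factorial k)) :=
    Real.summable_pow_div_factorial x
  have h2 : Summable (fun k : ℕ => (x * (1 - p)) ^ k / (Nat.factorial k)) :=
    Real.summable_pow_div_factorial _
  have key : (∑' k : ℕ, Real.exp (-x) * x ^ k / (Nat.factorial k) * ((1 - (1 - p) ^ k) / p)) =
      ∑' k : ℕ, ((Real.exp (-x) / p) * (x ^ k / (Nat.factorial k))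
        - (Real.exp (-x) / p) * ((x * (1 - p)) ^ k / (Nat.factorial k))) := by
    refine tsum_congr fun k => ?_
    rw [mul_pow]
    field_simp
  rw [key, Summable.tsum_sub (h1.mul_left _) (h2.mul_left _), tsum_mul_left, tsum_mul_left,
    tsum_exp', tsum_exp']
  rw [div_mul_eq_mul_div, div_mul_eq_mul_div, ← Real.exp_add, ← Real.exp_add]
  have : -x + x = 0 := by ring
  rw [this, Real.exp_zero]
  have : -x + x * (1 - p) = -(p * x) := by ring
  rw [this]
  ring
open Real Set

lemma part2 (p : ℝ) (hp : p ∈ Set.Ioo (0 : ℝ) 1) :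
    StrictMonoOn
      (fun x : ℝ => (1 - Real.exp (-(p * x))) / (1 - (1 - p) ^ x)) (Set.Ici 1) := by
  obtain ⟨hp0, hp1⟩ := hp
  have h1p : (0 : ℝ) < 1 - p := by linarith
  set q : ℝ := -Real.log (1 - p) with hq_def
  have hq0 : 0 < q := by
    have : Real.log (1 - p) < 0 := Real.log_neg h1p (by linarith)
    simp [hq_def]; linarith
  have hpq : p < q := by
    have := Real.log_lt_sub_one_of_pos h1p (by linarith)
    simp only [hq_def]; linarith
  have hrw : ∀ x : ℝ, (1 - p) ^ x = Real.exp (-(q * x)) := by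
    intro x
    rw [Real.rpow_def_of_pos h1p]
    congr 1
    simp only [hq_def]; ring
  have hfun : (fun x : ℝ => (1 - Real.exp (-(p * x))) / (1 - (1 - p) ^ x)) =
      fun x : ℝ => (1 - Real.exp (-(p * x))) / (1 - Real.exp (-(q * x))) := by
    funext x; rw [hrw x]
  rw [hfun]
  have hden : ∀ x : ℝ, 0 < x → 0 < 1 - Real.exp (-(q * x)) := by
    intro x hx
    have : Real.exp (-(q * x)) < 1 := by
      rw [Real.exp_lt_one_iff]
      nlinarith
    linarith
  apply strictMonoOn_of_deriv_pos (convex_Ici 1)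
  · apply ContinuousOn.div
    · fun_prop
    · fun_prop
    · intro x hx
      have := hden x (by simp at hx; linarith)
      linarith
  · intro x hx
    rw [interior_Ici] at hx
    have hx0 : 0 < x := by simp at hx ⊢; linarith
    have hne : 1 - Real.exp (-(q * x)) ≠ 0 := (hden x hx0).ne'
    have hd1 : HasDerivAt (fun y : ℝ => 1 - Real.exp (-(p * y)))
        (p * Real.exp (-(p * x))) x := by
      have : HasDerivAt (fun y : ℝ => Real.exp (-(p * y)))
          (Real.exp (-(p * x)) * -p) x := by
        simpa using (((hasDerivAt_id x).const_mul p).neg).exp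
      have h := (hasDerivAt_const x (1:ℝ)).sub this
      exact h.congr_deriv (by ring)
    have hd2 : HasDerivAt (fun y : ℝ => 1 - Real.exp (-(q * y)))
        (q * Real.exp (-(q * x))) x := by
      have : HasDerivAt (fun y : ℝ => Real.exp (-(q * y)))
          (Real.exp (-(q * x)) * -q) x := by
        simpa using (((hasDerivAt_id x).const_mul q).neg).exp
      have h := (hasDerivAt_const x (1:ℝ)).sub this
      exact h.congr_deriv (by ring)
    have hd := hd1.div hd2 hne
    rw [show deriv (fun x => (1 - rexp (-(p * x))) / (1 - rexp (-(q * x)))) x = _ from hd.deriv]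
    apply div_pos
    · -- numerator positivity from strict convexity of exp
      set e1 := Real.exp (-(p * x)) with he1
      set e2 := Real.exp (-(q * x)) with he2
      have hne' : -(p * x) ≠ -((p + q) * x) := by
        intro h
        have h2 := neg_injective h
        nlinarith [mul_pos hq0 hx0]
      have hwa : (0:ℝ) < p / q := div_pos hp0 hq0
      have hwb : (0:ℝ) < (q - p) / q := div_pos (by linarith) hq0
      have hsum : p / q + (q - p) / q = 1 := by field_simp; ring
      have hconv := strictConvexOn_exp.2 (mem_univ (-(p * x))) (mem_univ (-((p + q) * x)))
        hne' hwa hwb hsum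
      have harg : (p / q) • (-(p * x)) + ((q - p) / q) • (-((p + q) * x)) = -(q * x) := by
        simp only [smul_eq_mul]
        field_simp
        ring
      rw [harg] at hconv
      have hsplit : Real.exp (-((p + q) * x)) = e1 * e2 := by
        rw [he1, he2, ← Real.exp_add]; ring_nf
      simp only [smul_eq_mul, hsplit, ← he2] at hconv
      have he1pos : 0 < e1 := Real.exp_pos _
      have he2pos : 0 < e2 := Real.exp_pos _
      have key : q * e2 < p * e1 + (q - p) * (e1 * e2) := by
        have := mul_lt_mul_of_pos_left hconv hq0
        field_simp at this
        nlinarith [this]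
      nlinarith [key]
    · positivity

/-- For `p ∈ (0,1)` and `φ(j) = (1-(1-p)^j)/p`: the ratio
`E[φ(Poi x)]/φ(x) = (1-e^{-px})/(1-(1-p)^x)` is strictly increasing on `[1,∞)`, and
the Poisson concavity ratio is `α_φ = (1 - e^{-p})/p`. -/
theorem stmt10 (p : ℝ) (hp : p ∈ Set.Ioo (0 : ℝ) 1) :
    (∀ x : ℝ, 0 ≤ x →
        (∑' k : ℕ, Real.exp (-x) * x ^ k / (Nat.factorial k) * ((1 - (1 - p) ^ k) / p)) =
          (1 - Real.exp (-(p * x))) / p) ∧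
      StrictMonoOn
        (fun x : ℝ => (1 - Real.exp (-(p * x))) / (1 - (1 - p) ^ x)) (Set.Ici 1) ∧
      IsLeast
        {y : ℝ | ∃ n : ℕ, 1 ≤ n ∧
          y = (1 - Real.exp (-(p * n))) / (1 - (1 - p) ^ (n : ℝ))}
        ((1 - Real.exp (-p)) / p) := by
  obtain ⟨hp0, hp1⟩ := hp
  have hmono := part2 p ⟨hp0, hp1⟩
  have hval1 : (1 - Real.exp (-p)) / p =
      (1 - Real.exp (-(p * (1:ℝ)))) / (1 - (1 - p) ^ (1:ℝ)) := by
    rw [Real.rpow_one, mul_one]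
    ring_nf
  refine ⟨part1 p ⟨hp0, hp1⟩, hmono, ?_, ?_⟩
  · exact ⟨1, le_refl 1, by rw [hval1]; norm_num⟩
  · rintro y ⟨n, hn, rfl⟩
    have hn1 : (1:ℝ) ≤ (n:ℝ) := by exact_mod_cast hn
    rw [hval1]
    exact hmono.monotoneOn (Set.self_mem_Ici) hn1 hn1
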